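/- Let S be a regular semigroup and s ∈ S. Then s belongs to the subsemigroup generated by E(S) if and only if there exist n ≥ 1 and idempotents e₁, …, eₙ, f₁, …, f_{n−1} ∈ E(S) such that s R e₁, eᵢ L fᵢ, fᵢ R e_{i+1} (for 1 ≤ i ≤ n−1), eₙ L s, and s = e₁*f₁*e₂*⋯*f_{n−1}*eₙ. -/

import Mathlib

variable {S : Type*} [Semigroup S]

/-- An idempotent element. -/
def IsIdem (e : S) : Prop := e * e = e

/-- `a'` is an inverse of `a`. -/
def IsInv (a a' : S) : Prop := a * a' * a = a ∧ a' * a * a' = a'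

/-- A regular semigroup: every element has an inverse. -/
def Regular (S : Type*) [Semigroup S] : Prop := ∀ a : S, ∃ a', IsInv a a'

/-- A locally inverse semigroup: regular, and every local submonoid `eSe`
(for `e` idempotent) is inverse, i.e. every element of `eSe` has a unique
inverse lying in `eSe`. -/
def LocallyInverse (S : Type*) [Semigroup S] : Prop :=
  Regular S ∧ ∀ e : S, IsIdem e → ∀ x : S, (e * x = x ∧ x * e = x) →
    ∃! x' : S, (e * x' = x' ∧ x' * e = x') ∧ IsInv x x'

/-- Green's relation R: same principal right ideal. -/
def RRel (a b : S) : Prop :=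
  (insert a {x | ∃ s, x = a * s} : Set S) = insert b {x | ∃ s, x = b * s}

/-- Green's relation L: same principal left ideal. -/
def LRel (a b : S) : Prop :=
  (insert a {x | ∃ s, x = s * a} : Set S) = insert b {x | ∃ s, x = s * b}

/-- Green's relation D. -/
def DRel (a b : S) : Prop := ∃ c : S, RRel a c ∧ LRel c b

/-- `g` is the sandwich idempotent `e ∧ f` of the idempotents `e`, `f`. -/
def IsSandwich (e f g : S) : Prop :=
  IsIdem g ∧ ∀ h : S, IsIdem h → ((e * h = h ∧ h * f = h) ↔ (g * h = h ∧ h * g = h))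

/-- The natural partial order on a regular semigroup. -/
def NatLe (a b : S) : Prop :=
  ∃ e f : S, IsIdem e ∧ IsIdem f ∧ a = e * b ∧ a = b * f

namespace CoreAux

/-- Product x 0 * x 1 * ⋯ * x n. -/
def pref (x : ℕ → S) : ℕ → S
  | 0 => x 0
  | k+1 => pref x k * x (k+1)

theorem pref_congr {x y : ℕ → S} : ∀ {n}, (∀ k ≤ n, x k = y k) → pref x n = pref y n
  | 0, h => h 0 le_rfl
  | n+1, h => by
    simp only [pref]
    rw [pref_congr (fun k hk => h k (hk.trans (Nat.le_succ n))), h (n+1) le_rfl]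

theorem pref_comp (x : ℕ → S) (a b : ℕ) :
    pref x (a + b + 1) = pref x a * pref (fun j => x (a + 1 + j)) b := by
  induction b with
  | zero => simp [pref]
  | succ b ih =>
    have h1 : a + (b+1) + 1 = (a + b + 1) + 1 := by omega
    have h2 : a + 1 + (b + 1) = a + b + 1 + 1 := by omega
    rw [h1]
    calc pref x (a + b + 1 + 1) = pref x (a + b + 1) * x (a + b + 1 + 1) := rfl
      _ = pref x a * (pref (fun j => x (a + 1 + j)) b * x (a + b + 1 + 1)) := by
          rw [ih, mul_assoc]
      _ = pref x a * pref (fun j => x (a + 1 + j)) (b + 1) := by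
          show _ = pref x a * (pref (fun j => x (a + 1 + j)) b * x (a + 1 + (b + 1)))
          rw [h2]

/-- Product x k * x (k+1) * ⋯ * x m (for k ≤ m). -/
def seg (x : ℕ → S) (k m : ℕ) : S := pref (fun j => x (k + j)) (m - k)

theorem seg_self (x : ℕ → S) (k : ℕ) : seg x k k = x k := by
  simp [seg, pref]

theorem seg_comp (x : ℕ → S) {k m l : ℕ} (hkm : k ≤ m) (hml : m < l) :
    seg x k l = seg x k m * seg x (m+1) l := by
  have h1 : l - k = (m - k) + (l - (m+1)) + 1 := by omega
  unfold seg
  rw [h1, pref_comp]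
  congr 1
  apply pref_congr
  intro j _
  congr 1
  omega

theorem seg_succ_right (x : ℕ → S) {k m : ℕ} (h : k ≤ m) :
    seg x k (m+1) = seg x k m * x (m+1) := by
  rw [seg_comp x h (Nat.lt_succ_self m), seg_self]

theorem seg_succ_left (x : ℕ → S) {k m : ℕ} (h : k < m) :
    seg x k m = x k * seg x (k+1) m := by
  rw [seg_comp x le_rfl h, seg_self]

theorem seg_mul_last {x : ℕ → S} (hx : ∀ k, IsIdem (x k)) {k m : ℕ} (h : k ≤ m) :
    seg x k m * x m = seg x k m := by
  rcases Nat.lt_or_ge k m with hlt | hge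
  · obtain ⟨m', rfl⟩ : ∃ m', m = m' + 1 := ⟨m - 1, by omega⟩
    rw [seg_succ_right x (by omega), mul_assoc, hx (m'+1)]
  · have hkm : k = m := le_antisymm h hge
    subst hkm
    rw [seg_self]
    exact hx k

theorem first_mul_seg {x : ℕ → S} (hx : ∀ k, IsIdem (x k)) {k m : ℕ} (h : k ≤ m) :
    x k * seg x k m = seg x k m := by
  rcases Nat.lt_or_ge k m with hlt | hge
  · rw [seg_succ_left x hlt, ← mul_assoc, hx k]
  · have hkm : k = m := le_antisymm h hge
    subst hkm
    rw [seg_self]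
    exact hx k

theorem rrel_of {a b : S} (u v : S) (h1 : a = b * u) (h2 : b = a * v) : RRel a b := by
  have key : ∀ (c d w : S), c = d * w →
      (insert c {x | ∃ s, x = c * s} : Set S) ⊆ insert d {x | ∃ s, x = d * s} := by
    intro c d w hc z hz
    simp only [Set.mem_insert_iff, Set.mem_setOf_eq] at hz ⊢
    rcases hz with rfl | ⟨t, rfl⟩
    · exact Or.inr ⟨w, hc⟩
    · exact Or.inr ⟨w * t, by rw [hc, mul_assoc]⟩
  exact Set.Subset.antisymm (key a b u h1) (key b a v h2)

theorem lrel_of {a b : S} (u v : S) (h1 : a = u * b) (h2 : b = v * a) : LRel a b := by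
  have key : ∀ (c d w : S), c = w * d →
      (insert c {x | ∃ s, x = s * c} : Set S) ⊆ insert d {x | ∃ s, x = s * d} := by
    intro c d w hc z hz
    simp only [Set.mem_insert_iff, Set.mem_setOf_eq] at hz ⊢
    rcases hz with rfl | ⟨t, rfl⟩
    · exact Or.inr ⟨w, hc⟩
    · exact Or.inr ⟨t * w, by rw [hc, mul_assoc]⟩
  exact Set.Subset.antisymm (key a b u h1) (key b a v h2)

theorem foldl_mem (T : Subsemigroup S) :
    ∀ (L : List S) (b : S), b ∈ T → (∀ y ∈ L, y ∈ T) → List.foldl (· * ·) b L ∈ T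
  | [], b, hb, _ => hb
  | y :: L, b, hb, hL => by
    simp only [List.foldl_cons]
    exact foldl_mem T L (b * y) (T.mul_mem hb (hL y List.mem_cons_self))
      (fun z hz => hL z (List.mem_cons_of_mem y hz))

/-- FitzGerald idempotents. -/
def cc (x : ℕ → S) (a' : S) (N i : ℕ) : S := seg x i N * a' * seg x 0 i

def gg (x : ℕ → S) (a' : S) (N i : ℕ) : S := seg x (i+1) N * a' * seg x 0 i

theorem exists_rep {s : S} (h : s ∈ Subsemigroup.closure {x : S | IsIdem x}) :
    ∃ n : ℕ, ∃ x : ℕ → S, (∀ k, IsIdem (x k)) ∧ s = seg x 0 n := by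
  induction h using Subsemigroup.closure_induction with
  | mem y hy => exact ⟨0, fun _ => y, fun _ => hy, by rw [seg_self]⟩
  | mul b c hb hc ihb ihc =>
    obtain ⟨n, x, hx, hbx⟩ := ihb
    obtain ⟨m, y, hy, hcy⟩ := ihc
    refine ⟨n + m + 1, fun k => if k ≤ n then x k else y (k - (n+1)), fun k => ?_, ?_⟩
    · dsimp only
      split
      · exact hx _
      · exact hy _
    · rw [seg_comp _ (Nat.zero_le n) (by omega : n < n + m + 1)]
      congr 1
      · rw [hbx]
        unfold seg
        apply pref_congr
        intro k hk
        simp only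
        rw [if_pos (by omega)]
      · rw [hcy]
        unfold seg
        have h2 : n + m + 1 - (n + 1) = m := by omega
        rw [h2, Nat.sub_zero]
        apply pref_congr
        intro k hk
        simp only
        rw [if_neg (by omega)]
        congr 1
        omega

theorem fitz {N : ℕ} (x : ℕ → S) (hx : ∀ k, IsIdem (x k)) {a a' : S}
    (haeq : a = seg x 0 N) (hinv : IsInv a a') :
    ∃ e : Fin (N + 1) → S, ∃ f : Fin N → S,
      (∀ i, IsIdem (e i)) ∧ (∀ i, IsIdem (f i)) ∧
      RRel a (e 0) ∧
      (∀ i : Fin N, LRel (e i.castSucc) (f i)) ∧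
      (∀ i : Fin N, RRel (f i) (e i.succ)) ∧
      LRel (e (Fin.last N)) a ∧
      a = List.foldl (· * ·) (e 0) (List.ofFn fun i : Fin N => f i * e i.succ) := by
  obtain ⟨hi1, hi2⟩ := hinv
  have hA : ∀ i ≤ N, seg x 0 i * seg x i N = a := by
    intro i hi
    rcases Nat.lt_or_ge i N with hlt | hge
    · rw [seg_succ_left x hlt, ← mul_assoc, seg_mul_last hx (Nat.zero_le i),
        ← seg_comp x (Nat.zero_le i) hlt]
      exact haeq.symm
    · have hiN : i = N := le_antisymm hi hge
      rw [hiN, haeq, seg_self]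
      exact seg_mul_last hx (Nat.zero_le N)
  have hB : ∀ i < N, seg x 0 i * seg x (i+1) N = a := by
    intro i hi
    rw [← seg_comp x (Nat.zero_le i) hi]
    exact haeq.symm
  have hAt : ∀ i ≤ N, ∀ t : S, seg x 0 i * (seg x i N * t) = a * t := by
    intro i hi t; rw [← mul_assoc, hA i hi]
  have hBt : ∀ i < N, ∀ t : S, seg x 0 i * (seg x (i+1) N * t) = a * t := by
    intro i hi t; rw [← mul_assoc, hB i hi]
  have ha'2 : ∀ t : S, a' * (a * (a' * t)) = a' * t := by
    intro t; rw [← mul_assoc, ← mul_assoc, hi2]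
  have ha1 : a * (a' * a) = a := by rw [← mul_assoc, hi1]
  refine ⟨fun i => cc x a' N i.val, fun i => gg x a' N i.val, ?_, ?_, ?_, ?_, ?_, ?_, ?_⟩
  · intro i
    have hi : (i : ℕ) ≤ N := Nat.lt_succ_iff.mp i.isLt
    show cc x a' N i.val * cc x a' N i.val = cc x a' N i.val
    simp only [cc, mul_assoc]
    rw [hAt _ hi, ha'2]
  · intro i
    have hi : (i : ℕ) < N := i.isLt
    show gg x a' N i.val * gg x a' N i.val = gg x a' N i.val
    simp only [gg, mul_assoc]
    rw [hBt _ hi, ha'2]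
  · -- RRel a (cc 0)
    have h1 : a = cc x a' N ((0 : Fin (N+1)) : ℕ) * a := by
      simp only [Fin.val_zero, cc, seg_self, mul_assoc]
      rw [haeq, first_mul_seg hx (Nat.zero_le N), ← haeq]
      exact ha1.symm
    have h2 : cc x a' N ((0 : Fin (N+1)) : ℕ) = a * (a' * x 0) := by
      simp only [Fin.val_zero, cc, seg_self, mul_assoc, ← haeq]
    exact rrel_of a (a' * x 0) h1 h2
  · -- LRel (cc i) (gg i)
    intro i
    have hi : (i : ℕ) < N := i.isLt
    have h1 : cc x a' N (i.castSucc : ℕ) = x i.val * gg x a' N i.val := by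
      simp only [Fin.coe_castSucc, cc, gg]
      rw [seg_succ_left x hi]
      simp [mul_assoc]
    have h2 : gg x a' N i.val = gg x a' N i.val * cc x a' N (i.castSucc : ℕ) := by
      simp only [Fin.coe_castSucc, cc, gg, mul_assoc]
      rw [hAt _ (le_of_lt hi), ha'2]
    exact lrel_of (x i.val) (gg x a' N i.val) h1 h2
  · -- RRel (gg i) (cc (i+1))
    intro i
    have hi : (i : ℕ) < N := i.isLt
    have h1 : gg x a' N i.val = cc x a' N (i.succ : ℕ) * gg x a' N i.val := by
      simp only [Fin.val_succ, cc, gg, mul_assoc]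
      rw [hAt _ hi, ha'2]
    have h2 : cc x a' N (i.succ : ℕ) = gg x a' N i.val * x (i.val + 1) := by
      simp only [Fin.val_succ, cc, gg]
      rw [seg_succ_right x (Nat.zero_le i.val)]
      simp [mul_assoc]
    exact rrel_of (gg x a' N i.val) (x (i.val + 1)) h1 h2
  · -- LRel (cc N) a
    have h1 : cc x a' N ((Fin.last N : Fin (N+1)) : ℕ) = (x N * a') * a := by
      simp only [Fin.val_last, cc, seg_self, mul_assoc, ← haeq]
    have h2 : a = a * cc x a' N ((Fin.last N : Fin (N+1)) : ℕ) := by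
      simp only [Fin.val_last, cc, mul_assoc]
      rw [haeq, hAt N le_rfl, ← haeq]
      exact ha1.symm
    exact lrel_of (x N * a') a h1 h2
  · -- the product
    have hfold : ∀ k, k ≤ N →
        List.foldl (· * ·) (cc x a' N 0)
          (List.ofFn fun i : Fin k => gg x a' N i.val * cc x a' N (i.val + 1)) =
          a * (a' * seg x 0 k) := by
      intro k
      induction k with
      | zero =>
        intro _
        simp only [List.ofFn_zero, List.foldl_nil, cc, seg_self, mul_assoc, ← haeq]
      | succ k ih =>
        intro hk
        have hkN : k < N := hk
        rw [List.ofFn_succ', List.concat_eq_append, List.foldl_append]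
        simp only [List.foldl_cons, List.foldl_nil, Fin.coe_castSucc, Fin.val_last]
        rw [ih (le_of_lt hkN)]
        simp only [gg, cc, mul_assoc]
        simp only [hBt k hkN, ha'2]
    have final : a = a * (a' * seg x 0 N) := by
      rw [← haeq]
      exact ha1.symm
    simp only [Fin.val_succ, Fin.val_zero]
    rw [hfold N le_rfl]
    exact final

end CoreAux

theorem mem_core_iff (hS : Regular S) (s : S) :
    s ∈ Subsemigroup.closure {x : S | IsIdem x} ↔
      ∃ n : ℕ, ∃ e : Fin (n + 1) → S, ∃ f : Fin n → S,
        (∀ i, IsIdem (e i)) ∧ (∀ i, IsIdem (f i)) ∧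
        RRel s (e 0) ∧
        (∀ i : Fin n, LRel (e i.castSucc) (f i)) ∧
        (∀ i : Fin n, RRel (f i) (e i.succ)) ∧
        LRel (e (Fin.last n)) s ∧
        s = List.foldl (· * ·) (e 0) (List.ofFn fun i : Fin n => f i * e i.succ) := by
  constructor
  · intro h
    obtain ⟨n, x, hx, hseq⟩ := CoreAux.exists_rep h
    obtain ⟨s', hs'⟩ := hS s
    obtain ⟨e, f, h1, h2, h3, h4, h5, h6, h7⟩ := CoreAux.fitz x hx hseq hs'
    exact ⟨n, e, f, h1, h2, h3, h4, h5, h6, h7⟩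
  · rintro ⟨n, e, f, he, hf, -, -, -, -, hprod⟩
    rw [hprod]
    apply CoreAux.foldl_mem
    · exact Subsemigroup.subset_closure (he 0)
    · intro y hy
      simp only [List.mem_ofFn] at hy
      obtain ⟨i, rfl⟩ := hy
      exact mul_mem (Subsemigroup.subset_closure (hf i))
        (Subsemigroup.subset_closure (he i.succ))
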